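/- Let f : [0,1] → ℝ be twice continuously differentiable and let F be an antiderivative of f. Then for x ∈ [0,1], the Bernstein approximation B_m(x) := m ∑_{k=0}^{m-1} (F((k+1)/m) − F(k/m)) p_k(m-1,x) satisfies sup_{x∈[0,1]} |B_m(x) − f(x)| ≤ ‖f'‖_∞/(2m) + ‖f''‖_∞/(8m) + C/m for some constant C depending only on f, where ‖·‖_∞ denotes the supremum norm on [0,1]. -/

import Mathlib

set_option maxHeartbeats 1000000

def bern (m k : ℕ) (x : ℝ) : ℝ := (m.choose k : ℝ) * x ^ k * (1 - x) ^ (m - k)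

lemma bern_eval (n k : ℕ) (x : ℝ) : (bernsteinPolynomial ℝ n k).eval x = bern n k x := by
  simp [bernsteinPolynomial, bern]

lemma bern_nonneg {n k : ℕ} {x : ℝ} (hx : x ∈ Set.Icc (0:ℝ) 1) : 0 ≤ bern n k x := by
  have h1 : (0:ℝ) ≤ x := hx.1
  have h2 : (0:ℝ) ≤ 1 - x := by linarith [hx.2]
  unfold bern; positivity

lemma bern_sum (n : ℕ) (x : ℝ) : ∑ k ∈ Finset.range (n+1), bern n k x = 1 := by
  have h := congrArg (Polynomial.eval x) (bernsteinPolynomial.sum ℝ n)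
  simpa [Polynomial.eval_finset_sum, bern_eval] using h

lemma bern_sum1 (n : ℕ) (x : ℝ) :
    ∑ k ∈ Finset.range (n+1), (k:ℝ) * bern n k x = n * x := by
  have h := congrArg (Polynomial.eval x) (bernsteinPolynomial.sum_smul ℝ n)
  simpa [Polynomial.eval_finset_sum, bern_eval] using h

lemma natcast_mul_pred (ν : ℕ) : ((ν*(ν-1):ℕ):ℝ) = (ν:ℝ)*((ν:ℝ)-1) := by
  cases ν with
  | zero => simp
  | succ n => push_cast [Nat.succ_sub_one]; ring

lemma bern_sum2 (n : ℕ) (x : ℝ) :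
    ∑ k ∈ Finset.range (n+1), (k:ℝ) * ((k:ℝ) - 1) * bern n k x
      = (n:ℝ) * ((n:ℝ)-1) * x^2 := by
  have h := congrArg (Polynomial.eval x) (bernsteinPolynomial.sum_mul_smul ℝ n)
  rw [Polynomial.eval_finset_sum] at h
  simp only [nsmul_eq_mul, Polynomial.eval_mul, Polynomial.eval_natCast, Polynomial.eval_pow,
    Polynomial.eval_X, bern_eval] at h
  rw [← natcast_mul_pred, ← h]
  exact Finset.sum_congr rfl fun k _ => by rw [natcast_mul_pred]

lemma sq_le_endpoints {a b s x : ℝ} (h1 : a ≤ s) (h2 : s ≤ b) :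
    (s - x)^2 ≤ (a - x)^2 + (b - x)^2 := by
  rcases le_or_gt s x with h | h
  · nlinarith [sq_nonneg (b - x)]
  · nlinarith [sq_nonneg (a - x)]

theorem bernstein_density_bias_bound (f f' f'' F : ℝ → ℝ)
    (hf' : ∀ x ∈ Set.Icc (0:ℝ) 1, HasDerivAt f (f' x) x)
    (hf'' : ∀ x ∈ Set.Icc (0:ℝ) 1, HasDerivAt f' (f'' x) x)
    (hcont : ContinuousOn f'' (Set.Icc 0 1))
    (hF : ∀ x ∈ Set.Icc (0:ℝ) 1, HasDerivAt F (f x) x) :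
    ∃ C : ℝ, ∀ m : ℕ, 1 ≤ m → ∀ x ∈ Set.Icc (0:ℝ) 1,
      |(m : ℝ) * ∑ k ∈ Finset.range m,
          (F (((k : ℝ) + 1) / m) - F ((k : ℝ) / m)) * bern (m - 1) k x - f x|
        ≤ (⨆ y : Set.Icc (0:ℝ) 1, |f' y|) / (2 * m)
          + (⨆ y : Set.Icc (0:ℝ) 1, |f'' y|) / (8 * m) + C / m := by
  have hf'cont : ContinuousOn f' (Set.Icc (0:ℝ) 1) :=
    fun t ht => (hf'' t ht).continuousAt.continuousWithinAt
  obtain ⟨B1', hB1'⟩ := isCompact_Icc.exists_bound_of_continuousOn hf'cont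
  obtain ⟨B2', hB2'⟩ := isCompact_Icc.exists_bound_of_continuousOn hcont
  set B1 : ℝ := max B1' 0 with hB1def
  set B2 : ℝ := max B2' 0 with hB2def
  have hB1 : ∀ t ∈ Set.Icc (0:ℝ) 1, |f' t| ≤ B1 :=
    fun t ht => le_trans (by simpa using hB1' t ht) (le_max_left _ _)
  have hB2 : ∀ t ∈ Set.Icc (0:ℝ) 1, |f'' t| ≤ B2 :=
    fun t ht => le_trans (by simpa using hB2' t ht) (le_max_left _ _)
  have hB1nn : 0 ≤ B1 := le_max_right _ _
  have hB2nn : 0 ≤ B2 := le_max_right _ _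
  refine ⟨B1 / 2 + 2 * B2, ?_⟩
  intro m hm x hx
  obtain ⟨n, rfl⟩ : ∃ n, m = n + 1 := ⟨m - 1, (Nat.succ_pred_eq_of_pos hm).symm⟩
  simp only [Nat.add_sub_cancel]
  set M : ℝ := ((n:ℝ) + 1) with hMdef
  have hMcast : ((n + 1 : ℕ) : ℝ) = M := by push_cast [hMdef]; ring
  have hMpos : 0 < M := by positivity
  have hM1 : (1:ℝ) ≤ M := by rw [hMdef]; have : (0:ℝ) ≤ (n:ℝ) := Nat.cast_nonneg n; linarith
  have hMne : M ≠ 0 := ne_of_gt hMpos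
  rw [hMcast]
  -- Lipschitz bound for f'
  have hLip : ∀ s ∈ Set.Icc (0:ℝ) 1, ∀ t ∈ Set.Icc (0:ℝ) 1, |f' t - f' s| ≤ B2 * |t - s| := by
    intro s hs t ht
    have := (convex_Icc (0:ℝ) 1).norm_image_sub_le_of_norm_hasDerivWithin_le
      (fun u hu => (hf'' u hu).hasDerivWithinAt) (fun u hu => by simpa using hB2 u hu) hs ht
    simpa using this
  -- second-order Taylor bound
  have key2 : ∀ t ∈ Set.Icc (0:ℝ) 1, |f t - f x - f' x * (t - x)| ≤ B2 * (t - x)^2 := by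
    intro t ht
    have hsub : Set.uIcc x t ⊆ Set.Icc (0:ℝ) 1 := Set.uIcc_subset_Icc hx ht
    have habs : ∀ s ∈ Set.uIcc x t, |s - x| ≤ |t - x| := by
      intro s hs
      rw [Set.mem_uIcc] at hs
      rcases hs with ⟨h1, h2⟩ | ⟨h1, h2⟩
      · rw [abs_of_nonneg (by linarith)]
        calc s - x ≤ t - x := by linarith
          _ ≤ |t - x| := le_abs_self _
      · rw [abs_of_nonpos (by linarith)]
        calc -(s - x) ≤ -(t - x) := by linarith
          _ ≤ |t - x| := neg_le_abs _
    have hder : ∀ s ∈ Set.uIcc x t,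
        HasDerivWithinAt (fun u => f u - f x - f' x * (u - x)) (f' s - f' x) (Set.uIcc x t) s := by
      intro s hs
      have h1 : HasDerivAt (fun u => f u - f x - f' x * (u - x)) (f' s - f' x * 1) s :=
        ((hf' s (hsub hs)).sub_const (f x)).sub
          (((hasDerivAt_id s).sub_const x).const_mul (f' x))
      simpa using h1.hasDerivWithinAt
    have hbd : ∀ s ∈ Set.uIcc x t, ‖f' s - f' x‖ ≤ B2 * |t - x| := by
      intro s hs
      calc ‖f' s - f' x‖ = |f' s - f' x| := rfl
        _ ≤ B2 * |s - x| := by simpa using hLip x hx s (hsub hs)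
        _ ≤ B2 * |t - x| := mul_le_mul_of_nonneg_left (habs s hs) hB2nn
    have h2 := (convex_uIcc x t).norm_image_sub_le_of_norm_hasDerivWithin_le hder hbd
      Set.left_mem_uIcc Set.right_mem_uIcc
    simp only [Real.norm_eq_abs, sub_self, mul_zero, sub_zero] at h2
    calc |f t - f x - f' x * (t - x)| ≤ B2 * |t - x| * |t - x| := h2
      _ = B2 * (t - x)^2 := by rw [mul_assoc, abs_mul_abs_self, ← sq]
  -- the auxiliary function g and its increments
  set g : ℝ → ℝ := fun t => F t - f x * t - f' x * (t - x)^2 / 2 with hgdef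
  have hg : ∀ t ∈ Set.Icc (0:ℝ) 1, HasDerivAt g (f t - f x - f' x * (t - x)) t := by
    intro t ht
    have h1 : HasDerivAt g (f t - f x * 1 - f' x * (2 * (t - x)^1 * 1) / 2) t :=
      ((hF t ht).sub ((hasDerivAt_id t).const_mul (f x))).sub
        (((((hasDerivAt_id t).sub_const x).pow 2).const_mul (f' x)).div_const 2)
    convert h1 using 1
    ring
  have key3 : ∀ a b : ℝ, a ∈ Set.Icc (0:ℝ) 1 → b ∈ Set.Icc (0:ℝ) 1 → a ≤ b →
      |g b - g a| ≤ B2 * ((a - x)^2 + (b - x)^2) * (b - a) := by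
    intro a b ha hb hab
    have hsub : Set.Icc a b ⊆ Set.Icc (0:ℝ) 1 := Set.Icc_subset_Icc ha.1 hb.2
    have hder : ∀ s ∈ Set.Icc a b,
        HasDerivWithinAt g (f s - f x - f' x * (s - x)) (Set.Icc a b) s :=
      fun s hs => (hg s (hsub hs)).hasDerivWithinAt
    have hbd : ∀ s ∈ Set.Icc a b,
        ‖f s - f x - f' x * (s - x)‖ ≤ B2 * ((a - x)^2 + (b - x)^2) := by
      intro s hs
      calc ‖f s - f x - f' x * (s - x)‖ = |f s - f x - f' x * (s - x)| := rfl
        _ ≤ B2 * (s - x)^2 := key2 s (hsub hs)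
        _ ≤ B2 * ((a - x)^2 + (b - x)^2) :=
            mul_le_mul_of_nonneg_left (sq_le_endpoints hs.1 hs.2) hB2nn
    have h := (convex_Icc a b).norm_image_sub_le_of_norm_hasDerivWithin_le hder hbd
      (Set.left_mem_Icc.2 hab) (Set.right_mem_Icc.2 hab)
    simpa [Real.norm_eq_abs, abs_of_nonneg (sub_nonneg.2 hab)] using h
  -- membership of grid points
  have hmem : ∀ k ∈ Finset.range (n+1),
      (k:ℝ)/M ∈ Set.Icc (0:ℝ) 1 ∧ ((k:ℝ)+1)/M ∈ Set.Icc (0:ℝ) 1 := by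
    intro k hk
    have hkn : (k:ℝ) ≤ (n:ℝ) := Nat.cast_le.2 (Nat.lt_succ_iff.1 (Finset.mem_range.1 hk))
    have hk0 : (0:ℝ) ≤ (k:ℝ) := Nat.cast_nonneg k
    have hk1 : (k:ℝ) + 1 ≤ M := by rw [hMdef]; linarith
    constructor
    · exact ⟨by positivity, by rw [div_le_one hMpos]; linarith⟩
    · exact ⟨by positivity, by rw [div_le_one hMpos]; linarith⟩
  -- pointwise identity
  have iden : ∀ k : ℕ, M * (F (((k:ℝ)+1)/M) - F ((k:ℝ)/M))
      = f x + f' x * ((2*(k:ℝ)+1)/(2*M) - x) + M * (g (((k:ℝ)+1)/M) - g ((k:ℝ)/M)) := by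
    intro k
    simp only [hgdef]
    field_simp
    ring
  have hn : (n:ℝ) = M - 1 := by rw [hMdef]; ring
  -- first moment
  have moment1 : ∑ k ∈ Finset.range (n+1), ((2*(k:ℝ)+1)/(2*M) - x) * bern n k x
      = (1 - 2*x)/(2*M) := by
    have hptw : ∀ k ∈ Finset.range (n+1), ((2*(k:ℝ)+1)/(2*M) - x) * bern n k x
        = (1/M) * ((k:ℝ) * bern n k x) + (1/(2*M) - x) * bern n k x := by
      intro k _; field_simp; ring
    rw [Finset.sum_congr rfl hptw, Finset.sum_add_distrib, ← Finset.mul_sum, ← Finset.mul_sum,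
      bern_sum1, bern_sum, hn]
    field_simp
    ring
  -- second moment
  have moment2 : ∑ k ∈ Finset.range (n+1),
      (((k:ℝ)/M - x)^2 + (((k:ℝ)+1)/M - x)^2) * bern n k x
      = ((4 - 2*M)*x^2 + (2*M - 4)*x + 1)/M^2 := by
    have hptw : ∀ k ∈ Finset.range (n+1),
        (((k:ℝ)/M - x)^2 + (((k:ℝ)+1)/M - x)^2) * bern n k x
        = (2/M^2) * ((k:ℝ) * ((k:ℝ)-1) * bern n k x)
          + (4/M^2 - 4*x/M) * ((k:ℝ) * bern n k x)
          + (1/M^2 - 2*x/M + 2*x^2) * bern n k x := by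
      intro k _; field_simp; ring
    rw [Finset.sum_congr rfl hptw, Finset.sum_add_distrib, Finset.sum_add_distrib,
      ← Finset.mul_sum, ← Finset.mul_sum, ← Finset.mul_sum, bern_sum2, bern_sum1, bern_sum, hn]
    field_simp
    ring
  -- expansion of the approximation error
  have expand : M * ∑ k ∈ Finset.range (n+1),
        (F (((k:ℝ)+1)/M) - F ((k:ℝ)/M)) * bern n k x - f x
      = f' x * ((1 - 2*x)/(2*M))
        + ∑ k ∈ Finset.range (n+1), (M * (g (((k:ℝ)+1)/M) - g ((k:ℝ)/M))) * bern n k x := by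
    rw [Finset.mul_sum]
    have h1 : ∀ k ∈ Finset.range (n+1),
        M * ((F (((k:ℝ)+1)/M) - F ((k:ℝ)/M)) * bern n k x)
        = f x * bern n k x + f' x * (((2*(k:ℝ)+1)/(2*M) - x) * bern n k x)
          + (M * (g (((k:ℝ)+1)/M) - g ((k:ℝ)/M))) * bern n k x := by
      intro k _
      rw [← mul_assoc, iden k]
      ring
    rw [Finset.sum_congr rfl h1, Finset.sum_add_distrib, Finset.sum_add_distrib,
      ← Finset.mul_sum, ← Finset.mul_sum, bern_sum, moment1]
    ring
  -- bound for the remainder sum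
  have hQ : (4 - 2*M)*x^2 + (2*M - 4)*x + 1 ≤ 2*M := by
    nlinarith [mul_nonneg hMpos.le (sq_nonneg (2*x-1)), mul_nonneg hx.1 (sub_nonneg.2 hx.2),
      sq_nonneg (2*x-1)]
  have hRbound : |∑ k ∈ Finset.range (n+1),
      (M * (g (((k:ℝ)+1)/M) - g ((k:ℝ)/M))) * bern n k x| ≤ 2 * B2 / M := by
    calc |∑ k ∈ Finset.range (n+1), (M * (g (((k:ℝ)+1)/M) - g ((k:ℝ)/M))) * bern n k x|
        ≤ ∑ k ∈ Finset.range (n+1), |(M * (g (((k:ℝ)+1)/M) - g ((k:ℝ)/M))) * bern n k x| :=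
          Finset.abs_sum_le_sum_abs _ _
      _ ≤ ∑ k ∈ Finset.range (n+1),
          B2 * ((((k:ℝ)/M - x)^2 + (((k:ℝ)+1)/M - x)^2) * bern n k x) := by
          apply Finset.sum_le_sum
          intro k hk
          rw [abs_mul, abs_of_nonneg (bern_nonneg hx), ← mul_assoc]
          apply mul_le_mul_of_nonneg_right _ (bern_nonneg hx)
          rw [abs_mul, abs_of_pos hMpos]
          have hab : (k:ℝ)/M ≤ ((k:ℝ)+1)/M :=
            (div_le_div_iff_of_pos_right hMpos).2 (by linarith)
          have h3 := key3 ((k:ℝ)/M) (((k:ℝ)+1)/M) (hmem k hk).1 (hmem k hk).2 hab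
          have hba : ((k:ℝ)+1)/M - (k:ℝ)/M = 1/M := by field_simp; ring
          rw [hba] at h3
          calc M * |g (((k:ℝ)+1)/M) - g ((k:ℝ)/M)|
              ≤ M * (B2 * (((k:ℝ)/M - x)^2 + (((k:ℝ)+1)/M - x)^2) * (1/M)) :=
                mul_le_mul_of_nonneg_left h3 hMpos.le
            _ = B2 * (((k:ℝ)/M - x)^2 + (((k:ℝ)+1)/M - x)^2) := by
                field_simp
      _ = B2 * (((4 - 2*M)*x^2 + (2*M - 4)*x + 1)/M^2) := by
          rw [← Finset.mul_sum, moment2]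
      _ ≤ B2 * (2*M/M^2) := by
          exact mul_le_mul_of_nonneg_left
            ((div_le_div_iff_of_pos_right (pow_pos hMpos 2)).2 hQ) hB2nn
      _ = 2 * B2 / M := by
          field_simp
  -- final assembly
  rw [expand]
  have habs1 : |f' x * ((1 - 2*x)/(2*M))| ≤ B1 * (1/(2*M)) := by
    rw [abs_mul]
    apply mul_le_mul (hB1 x hx) ?_ (abs_nonneg _) hB1nn
    rw [abs_div, abs_of_pos (by linarith : (0:ℝ) < 2*M)]
    exact (div_le_div_iff_of_pos_right (by linarith)).2
      (abs_le.2 ⟨by linarith [hx.1, hx.2], by linarith [hx.1, hx.2]⟩)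
  calc |f' x * ((1 - 2*x)/(2*M))
        + ∑ k ∈ Finset.range (n+1), (M * (g (((k:ℝ)+1)/M) - g ((k:ℝ)/M))) * bern n k x|
      ≤ |f' x * ((1 - 2*x)/(2*M))|
        + |∑ k ∈ Finset.range (n+1), (M * (g (((k:ℝ)+1)/M) - g ((k:ℝ)/M))) * bern n k x| :=
        abs_add_le _ _
    _ ≤ B1 * (1/(2*M)) + 2 * B2 / M := add_le_add habs1 hRbound
    _ ≤ (⨆ y : Set.Icc (0:ℝ) 1, |f' y|) / (2 * M)
        + (⨆ y : Set.Icc (0:ℝ) 1, |f'' y|) / (8 * M) + (B1 / 2 + 2 * B2) / M := by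
        have h1 : 0 ≤ (⨆ y : Set.Icc (0:ℝ) 1, |f' y|) / (2 * M) :=
          div_nonneg (Real.iSup_nonneg fun y => abs_nonneg _) (by linarith)
        have h2 : 0 ≤ (⨆ y : Set.Icc (0:ℝ) 1, |f'' y|) / (8 * M) :=
          div_nonneg (Real.iSup_nonneg fun y => abs_nonneg _) (by linarith)
        have h3 : B1 * (1/(2*M)) + 2 * B2 / M = (B1 / 2 + 2 * B2) / M := by
          field_simp
        linarith
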